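/- arXiv:1012.2632 — 2 statements merged into one kernel-verified Lean document; each statement's English description precedes it below -/
import Mathlib

section
/- Let C be a positive integer and let Γ be a distance-regular graph with diameter D ≥ 3 such that b₂ ≤ C·c₂. Then the number v of vertices of Γ satisfies v ≤ (3 + C + C² + ⋯ + C^{D−2})·k₂. -/
open SimpleGraph

/-- `IsDRG G D b c` : `G` is a distance-regular graph with diameter `D` and
intersection numbers `b i`, `c i`.  The valency is `k = b 0`. -/
structure IsDRG {V : Type*} [Fintype V] (G : SimpleGraph V) (D : ℕ) (b c : ℕ → ℕ) : Prop where
  connected : G.Connected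
  one_le_diam : 1 ≤ D
  dist_le : ∀ x y : V, G.dist x y ≤ D
  exists_dist_eq : ∃ x y : V, G.dist x y = D
  c_zero : c 0 = 0
  b_diam : b D = 0
  c_one : c 1 = 1
  count_c : ∀ i ≤ D, ∀ x y : V, G.dist x y = i →
      {z : V | G.Adj y z ∧ G.dist x z = i - 1}.ncard = c i
  count_b : ∀ i ≤ D, ∀ x y : V, G.dist x y = i →
      {z : V | G.Adj y z ∧ G.dist x z = i + 1}.ncard = b i

/-- `θ` is an eigenvalue of the adjacency matrix of `G`. -/
def IsAdjEigenvalue {V : Type*} [Fintype V] (G : SimpleGraph V) [DecidableRel G.Adj]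
    (θ : ℝ) : Prop :=
  ∃ v : V → ℝ, v ≠ 0 ∧ (G.adjMatrix ℝ).mulVec v = θ • v

/-- The `(t+1) × (t+1)` tridiagonal matrix `L_Γ(t)` with subdiagonal `c i`,
diagonal `a i = b 0 - b i - c i` (so `a 0 = 0`) and superdiagonal `b i`. -/
def Lmat (b c : ℕ → ℕ) (t : ℕ) : Matrix (Fin (t + 1)) (Fin (t + 1)) ℝ :=
  fun i j =>
    if (i : ℕ) = (j : ℕ) + 1 then (c (i : ℕ) : ℝ)
    else if (i : ℕ) = (j : ℕ) then (b 0 : ℝ) - (b (i : ℕ) : ℝ) - (c (i : ℕ) : ℝ)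
    else if (j : ℕ) = (i : ℕ) + 1 then (b (i : ℕ) : ℝ)
    else 0

/-- `θ` is an eigenvalue of the real matrix `M`. -/
def IsMatEigenvalue {n : Type*} [Fintype n] (M : Matrix n n ℝ) (θ : ℝ) : Prop :=
  ∃ v : n → ℝ, v ≠ 0 ∧ M.mulVec v = θ • v

/-- A Terwilliger graph: connected, non-complete, and for any two vertices at
distance two the set of their common neighbours is a clique. -/
def IsTerwilliger {V : Type*} (G : SimpleGraph V) : Prop :=
  G.Connected ∧ (∃ u v : V, u ≠ v ∧ ¬ G.Adj u v) ∧
    ∀ u v : V, G.dist u v = 2 → G.IsClique (G.commonNeighbors u v)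



section Aux
set_option linter.unusedSectionVars false
variable {V : Type} [Fintype V] {G : SimpleGraph V}


lemma dist_getVert_le (hconn : G.Connected) {x y : V} (p : G.Walk x y) (i : ℕ) :
    G.dist x (p.getVert i) ≤ i := by
  induction i with
  | zero => simp [p.getVert_zero]
  | succ i ih =>
    by_cases hi : i < p.length
    · have hadj := p.adj_getVert_succ hi
      have h2 : G.dist (p.getVert i) (p.getVert (i + 1)) = 1 :=
        (dist_eq_one_iff_adj).mpr hadj
      have h3 := hconn.dist_triangle (u := x) (v := p.getVert i) (w := p.getVert (i + 1))
      omega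
    · have e1 : p.getVert (i + 1) = y := p.getVert_of_length_le (by omega)
      have e2 : p.getVert i = y := p.getVert_of_length_le (by omega)
      rw [e1]; rw [e2] at ih; omega

lemma dist_getVert_eq (hconn : G.Connected) {x y : V} (p : G.Walk x y)
    (hp : p.length = G.dist x y) {i : ℕ} (hi : i ≤ p.length) :
    G.dist x (p.getVert i) = i ∧ G.dist (p.getVert i) y = p.length - i := by
  have h1 := dist_getVert_le hconn p i
  have h2 : G.dist (p.getVert i) y ≤ p.length - i := by
    have := dist_getVert_le hconn p.reverse (p.length - i)
    rw [p.getVert_reverse, Nat.sub_sub_self hi] at this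
    rwa [dist_comm]
  have h3 := hconn.dist_triangle (u := x) (v := p.getVert i) (w := y)
  constructor <;> omega

lemma exists_midpoint (hconn : G.Connected) {x y : V} {n j : ℕ}
    (hxy : G.dist x y = n) (hj : j ≤ n) :
    ∃ w : V, G.dist x w = j ∧ G.dist w y = n - j := by
  obtain ⟨p, hp⟩ := (hconn x y).exists_walk_length_eq_dist
  have hlen : p.length = n := by rw [hp, hxy]
  refine ⟨p.getVert j, ?_, ?_⟩
  · exact (dist_getVert_eq hconn p hp (by omega)).1
  · have := (dist_getVert_eq hconn p hp (i := j) (by omega)).2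
    omega


variable {D : ℕ} {b c : ℕ → ℕ}

lemma IsDRG.exists_pair (h : IsDRG G D b c) {i : ℕ} (hi : i ≤ D) :
    ∃ x y : V, G.dist x y = i := by
  obtain ⟨x, y, hxy⟩ := h.exists_dist_eq
  obtain ⟨w, hw, _⟩ := exists_midpoint h.connected (n := D) hxy hi
  exact ⟨x, w, hw⟩

lemma IsDRG.c_pos (h : IsDRG G D b c) {i : ℕ} (h1 : 1 ≤ i) (hiD : i ≤ D) : 1 ≤ c i := by
  obtain ⟨x, y, hxy⟩ := h.exists_pair hiD
  obtain ⟨p, hp⟩ := (h.connected x y).exists_walk_length_eq_dist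
  have hlen : p.length = i := by rw [hp, hxy]
  have hz : G.dist x (p.getVert (i - 1)) = i - 1 :=
    (dist_getVert_eq h.connected p hp (by omega)).1
  have hadj : G.Adj (p.getVert (i - 1)) y := by
    have := p.adj_getVert_succ (i := i - 1) (by omega)
    have e : i - 1 + 1 = p.length := by omega
    rwa [e, p.getVert_length] at this
  have hmem : p.getVert (i - 1) ∈ {z : V | G.Adj y z ∧ G.dist x z = i - 1} :=
    ⟨hadj.symm, hz⟩
  have := h.count_c i hiD x y hxy
  rw [← this]
  exact le_trans ((Set.ncard_pos (Set.toFinite _)).mpr ⟨_, hmem⟩) le_rfl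

lemma IsDRG.b_pos (h : IsDRG G D b c) {i : ℕ} (hiD : i + 1 ≤ D) : 1 ≤ b i := by
  obtain ⟨x, y, hxy⟩ := h.exists_pair hiD
  obtain ⟨w, hw1, hw2⟩ := exists_midpoint h.connected hxy (j := i) (by omega)
  have hwy1 : G.dist w y = 1 := by omega
  have hadj : G.Adj w y := (dist_eq_one_iff_adj).mp hwy1
  have hmem : y ∈ {z : V | G.Adj w z ∧ G.dist x z = i + 1} := ⟨hadj, hxy⟩
  have := h.count_b i (by omega) x w hw1
  rw [← this]
  exact (Set.ncard_pos (Set.toFinite _)).mpr ⟨_, hmem⟩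

lemma adj_dist_ub (hconn : G.Connected) {x y z : V} (hadj : G.Adj y z) :
    G.dist x z ≤ G.dist x y + 1 := by
  have h2 : G.dist y z = 1 := (dist_eq_one_iff_adj).mpr hadj
  have := hconn.dist_triangle (u := x) (v := y) (w := z)
  omega

lemma IsDRG.b_le_b2 (h : IsDRG G D b c) {i : ℕ} (h2 : 2 ≤ i) (hiD : i ≤ D) :
    b i ≤ b 2 := by
  obtain ⟨x, y, hxy⟩ := h.exists_pair hiD
  obtain ⟨w, hw1, hw2⟩ := exists_midpoint h.connected hxy (j := i - 2) (by omega)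
  have hw2' : G.dist w y = 2 := by omega
  have hsub : {z : V | G.Adj y z ∧ G.dist x z = i + 1} ⊆
      {z : V | G.Adj y z ∧ G.dist w z = 2 + 1} := by
    rintro z ⟨hadj, hdz⟩
    refine ⟨hadj, ?_⟩
    have hub : G.dist w z ≤ 3 := by
      have := adj_dist_ub h.connected (x := w) hadj
      omega
    have hlb : G.dist x z ≤ G.dist x w + G.dist w z :=
      h.connected.dist_triangle
    omega
  have e1 := h.count_b i hiD x y hxy
  have e2 := h.count_b 2 (by omega) w y hw2'
  rw [← e1, ← e2]
  exact Set.ncard_le_ncard hsub (Set.toFinite _)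

lemma IsDRG.c2_le_c (h : IsDRG G D b c) {i : ℕ} (h2 : 2 ≤ i) (hiD : i ≤ D) :
    c 2 ≤ c i := by
  obtain ⟨x, y, hxy⟩ := h.exists_pair hiD
  obtain ⟨w, hw1, hw2⟩ := exists_midpoint h.connected hxy (j := i - 2) (by omega)
  have hw2' : G.dist w y = 2 := by omega
  have hsub : {z : V | G.Adj y z ∧ G.dist w z = 2 - 1} ⊆
      {z : V | G.Adj y z ∧ G.dist x z = i - 1} := by
    rintro z ⟨hadj, hdz⟩
    refine ⟨hadj, ?_⟩
    have hub : G.dist x z ≤ G.dist x w + G.dist w z := h.connected.dist_triangle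
    have hlb : G.dist x y ≤ G.dist x z + 1 := by
      have h1 : G.dist z y = 1 := (dist_eq_one_iff_adj).mpr hadj.symm
      have := h.connected.dist_triangle (u := x) (v := z) (w := y)
      omega
    omega
  have e1 := h.count_c 2 (by omega) w y hw2'
  have e2 := h.count_c i hiD x y hxy
  rw [← e1, ← e2]
  exact Set.ncard_le_ncard hsub (Set.toFinite _)

lemma IsDRG.c2_le_b1 (h : IsDRG G D b c) (hD : 3 ≤ D) : c 2 ≤ b 1 := by
  obtain ⟨x, y, hxy⟩ := h.exists_pair hD
  obtain ⟨w, hw1, hw2⟩ := exists_midpoint h.connected hxy (j := 2) (by omega)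
  have hw2' : G.dist w y = 1 := by omega
  have hwy : G.dist y w = 1 := by rwa [dist_comm]
  have hsub : {z : V | G.Adj w z ∧ G.dist x z = 2 - 1} ⊆
      {z : V | G.Adj w z ∧ G.dist y z = 1 + 1} := by
    rintro z ⟨hadj, hdz⟩
    refine ⟨hadj, ?_⟩
    have hub : G.dist y z ≤ 2 := by
      have := adj_dist_ub h.connected (x := y) hadj
      omega
    have hlb : G.dist x y ≤ G.dist x z + G.dist z y := h.connected.dist_triangle
    have hc : G.dist z y = G.dist y z := dist_comm ..
    have hxy3 : G.dist x y = 3 := hxy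
    omega
  have e1 := h.count_c 2 (by omega) x w hw1
  have e2 := h.count_b 1 (by omega) y w hwy
  rw [← e1, ← e2]
  exact Set.ncard_le_ncard hsub (Set.toFinite _)

lemma IsDRG.key_count (h : IsDRG G D b c) (x : V) {i : ℕ} (hiD : i + 1 ≤ D) :
    {y : V | G.dist x y = i}.ncard * b i =
      {y : V | G.dist x y = i + 1}.ncard * c (i + 1) := by
  classical
  set s : Finset V := Finset.univ.filter (fun y => G.dist x y = i) with hs
  set t : Finset V := Finset.univ.filter (fun y => G.dist x y = i + 1) with ht
  have hns : {y : V | G.dist x y = i}.ncard = s.card := by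
    rw [hs]; simp [Set.ncard_eq_toFinset_card', Set.toFinset_setOf]
  have hnt : {y : V | G.dist x y = i + 1}.ncard = t.card := by
    rw [ht]; simp [Set.ncard_eq_toFinset_card', Set.toFinset_setOf]
  have hrow : ∀ y ∈ s, (t.filter (fun z => G.Adj y z)).card = b i := by
    intro y hy
    have hdy : G.dist x y = i := by simpa [hs] using hy
    have e := h.count_b i (by omega) x y hdy
    rw [← e]
    have : {z : V | G.Adj y z ∧ G.dist x z = i + 1} =
        ↑(t.filter (fun z => G.Adj y z)) := by
      ext z; simp [ht, and_comm]
    rw [this, Set.ncard_coe_finset]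
  have hcol : ∀ z ∈ t, (s.filter (fun y => G.Adj y z)).card = c (i + 1) := by
    intro z hz
    have hdz : G.dist x z = i + 1 := by simpa [ht] using hz
    have e := h.count_c (i + 1) hiD x z hdz
    rw [← e]
    have : {y : V | G.Adj z y ∧ G.dist x y = i + 1 - 1} =
        ↑(s.filter (fun y => G.Adj y z)) := by
      ext y
      simp only [Set.mem_setOf_eq, Finset.coe_filter, Finset.mem_univ, true_and, hs,
        Finset.mem_filter, Nat.add_sub_cancel]
      rw [G.adj_comm]
      tauto
    rw [this, Set.ncard_coe_finset]
  rw [hns, hnt]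
  calc s.card * b i = ∑ _y ∈ s, b i := by rw [Finset.sum_const, smul_eq_mul, mul_comm]
    _ = ∑ y ∈ s, (t.filter (fun z => G.Adj y z)).card := by
        exact (Finset.sum_congr rfl hrow).symm
    _ = ∑ y ∈ s, ∑ z ∈ t, (if G.Adj y z then 1 else 0) := by
        simp only [Finset.card_filter]
    _ = ∑ z ∈ t, ∑ y ∈ s, (if G.Adj y z then 1 else 0) := Finset.sum_comm
    _ = ∑ z ∈ t, (s.filter (fun y => G.Adj y z)).card := by
        simp only [Finset.card_filter]
    _ = ∑ _z ∈ t, c (i + 1) := Finset.sum_congr rfl hcol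
    _ = t.card * c (i + 1) := by rw [Finset.sum_const, smul_eq_mul]


end Aux

/-- If `Γ` is distance-regular with diameter `D ≥ 3` and `b₂ ≤ C·c₂`, then the number of
vertices satisfies `v ≤ (3 + C + C² + ⋯ + C^(D-2)) · k₂`. -/
theorem card_le_sum_pow_mul_k2 {V : Type} [Fintype V] (G : SimpleGraph V) (D : ℕ)
    (b c : ℕ → ℕ) (h : IsDRG G D b c) (hD : 3 ≤ D) (C : ℕ) (hC : 0 < C)
    (hbc : b 2 ≤ C * c 2) :
    ∀ x : V, Fintype.card V ≤
      (3 + ∑ j ∈ Finset.Icc 1 (D - 2), C ^ j) * {y : V | G.dist x y = 2}.ncard := by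
  intro x
  classical
  let n : ℕ → ℕ := fun i => {y : V | G.dist x y = i}.ncard
  have hn : ∀ i, n i = {y : V | G.dist x y = i}.ncard := fun _ => rfl
  have hconn := h.connected
  -- n 0 = 1
  have hset0 : {y : V | G.dist x y = 0} = {x} := by
    ext y
    simp only [Set.mem_setOf_eq, Set.mem_singleton_iff]
    rw [hconn.dist_eq_zero_iff]
    exact eq_comm
  have hn0 : n 0 = 1 := by rw [hn, hset0, Set.ncard_singleton]
  -- a vertex at distance 1 from x
  obtain ⟨u, w, huw⟩ := h.exists_dist_eq
  have huw' : u ≠ w := by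
    intro e; rw [e, SimpleGraph.dist_self] at huw; omega
  have hy0 : ∃ y0 : V, y0 ≠ x := by
    by_cases hu : u = x
    · exact ⟨w, by rw [← hu]; exact fun e => huw' e.symm⟩
    · exact ⟨u, hu⟩
  obtain ⟨y0, hy0ne⟩ := hy0
  have hpos : 0 < G.dist x y0 := hconn.pos_dist_of_ne (fun e => hy0ne e.symm)
  obtain ⟨p, hp⟩ := (hconn x y0).exists_walk_length_eq_dist
  have hy1 : G.dist x (p.getVert 1) = 1 :=
    (dist_getVert_eq hconn p hp (by omega)).1
  -- n 2 ≥ 1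
  have hn2pos : 1 ≤ n 2 := by
    have hb1 : 1 ≤ b 1 := h.b_pos (by omega)
    have e := h.count_b 1 (by omega) x (p.getVert 1) hy1
    have hne : {z : V | G.Adj (p.getVert 1) z ∧ G.dist x z = 1 + 1}.Nonempty := by
      apply Set.nonempty_of_ncard_ne_zero; omega
    obtain ⟨z, _, hz2⟩ := hne
    rw [hn]
    exact (Set.ncard_pos (Set.toFinite _)).mpr ⟨z, hz2⟩
  -- n 1 ≤ n 2
  have hn12 : n 1 ≤ n 2 := by
    have e : n 1 * b 1 = n 2 * c 2 := h.key_count x (by omega)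
    have hc2 : 1 ≤ c 2 := h.c_pos (by omega) (by omega)
    have hcb := h.c2_le_b1 hD
    have : n 1 * c 2 ≤ n 2 * c 2 := by
      calc n 1 * c 2 ≤ n 1 * b 1 := Nat.mul_le_mul_left _ hcb
        _ = n 2 * c 2 := e
    exact Nat.le_of_mul_le_mul_right this (by omega)
  -- recursion
  have hstep : ∀ i, 2 ≤ i → i + 1 ≤ D → n (i + 1) ≤ C * n i := by
    intro i h2i hi1
    have e : n i * b i = n (i + 1) * c (i + 1) := h.key_count x hi1
    have hci : c 2 ≤ c (i + 1) := h.c2_le_c (by omega) hi1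
    have hc2 : 1 ≤ c 2 := h.c_pos (by omega) (by omega)
    have hbi : b i ≤ C * c (i + 1) :=
      le_trans (le_trans (h.b_le_b2 h2i (by omega)) hbc) (Nat.mul_le_mul_left C hci)
    have hle : n (i + 1) * c (i + 1) ≤ (C * n i) * c (i + 1) := by
      calc n (i + 1) * c (i + 1) = n i * b i := e.symm
        _ ≤ n i * (C * c (i + 1)) := Nat.mul_le_mul_left _ hbi
        _ = (C * n i) * c (i + 1) := by ring
    exact Nat.le_of_mul_le_mul_right hle (by omega)
  have hpow : ∀ j, 2 + j ≤ D → n (2 + j) ≤ C ^ j * n 2 := by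
    intro j
    induction j with
    | zero => intro _; simp
    | succ j ih =>
      intro hj
      have e : 2 + (j + 1) = (2 + j) + 1 := by omega
      rw [e]
      calc n ((2 + j) + 1) ≤ C * n (2 + j) := hstep (2 + j) (by omega) (by omega)
        _ ≤ C * (C ^ j * n 2) := Nat.mul_le_mul_left _ (ih (by omega))
        _ = C ^ (j + 1) * n 2 := by ring
  -- total count
  have hcard : Fintype.card V = ∑ i ∈ Finset.range (D + 1), n i := by
    rw [← Finset.card_univ]
    rw [Finset.card_eq_sum_card_fiberwise
      (s := Finset.univ) (t := Finset.range (D + 1)) (f := fun y => G.dist x y)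
      (fun y _ => Finset.mem_range.mpr (Nat.lt_succ_of_le (h.dist_le x y)))]
    refine Finset.sum_congr rfl fun i _ => ?_
    rw [hn]
    simp [Set.ncard_eq_toFinset_card', Set.toFinset_setOf]
  have hsplit : ∑ i ∈ Finset.range (D + 1), n i
      = n 0 + n 1 + ∑ j ∈ Finset.range (D - 1), n (2 + j) := by
    rw [Finset.range_eq_Ico,
      ← Finset.sum_Ico_consecutive _ (by omega : 0 ≤ 2) (by omega : 2 ≤ D + 1)]
    have ha : ∑ i ∈ Finset.Ico 0 2, n i = n 0 + n 1 := by
      rw [← Finset.range_eq_Ico, Finset.sum_range_succ, Finset.sum_range_one]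
    have hb : ∑ i ∈ Finset.Ico 2 (D + 1), n i
        = ∑ j ∈ Finset.range (D - 1), n (2 + j) := by
      rw [Finset.sum_Ico_eq_sum_range]
      have e : D + 1 - 2 = D - 1 := by omega
      rw [e]
    rw [ha, hb, Finset.range_eq_Ico]
  have hsum2 : ∑ j ∈ Finset.range (D - 1), n (2 + j)
      ≤ (∑ j ∈ Finset.range (D - 1), C ^ j) * n 2 := by
    rw [Finset.sum_mul]
    exact Finset.sum_le_sum fun j hj =>
      hpow j (by have := Finset.mem_range.mp hj; omega)
  have hcoef : ∑ j ∈ Finset.range (D - 1), C ^ j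
      = 1 + ∑ j ∈ Finset.Icc 1 (D - 2), C ^ j := by
    have e1 : D - 1 = (D - 2) + 1 := by omega
    have e2 : Finset.Icc 1 (D - 2) = Finset.Ico 1 ((D - 2) + 1) :=
      (Finset.Ico_add_one_right_eq_Icc _ _).symm
    rw [e1, Finset.sum_range_succ', e2, Finset.sum_Ico_eq_sum_range]
    simp only [pow_zero, Nat.add_sub_cancel]
    rw [Nat.add_comm]
    congr 1
    exact Finset.sum_congr rfl fun i _ => by rw [Nat.add_comm 1 i]
  show Fintype.card V ≤ (3 + ∑ j ∈ Finset.Icc 1 (D - 2), C ^ j) * n 2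
  rw [hcard, hsplit]
  calc n 0 + n 1 + ∑ j ∈ Finset.range (D - 1), n (2 + j)
      ≤ n 2 + n 2 + (∑ j ∈ Finset.range (D - 1), C ^ j) * n 2 := by
        have h0 : n 0 ≤ n 2 := hn0 ▸ hn2pos
        exact Nat.add_le_add (Nat.add_le_add h0 hn12) hsum2
    _ = (2 + ∑ j ∈ Finset.range (D - 1), C ^ j) * n 2 := by ring
    _ = (3 + ∑ j ∈ Finset.Icc 1 (D - 2), C ^ j) * n 2 := by rw [hcoef]; ring
end

section
/- Let t be a positive integer and let Γ be a distance-regular graph with valency k and diameter D ≥ 2t such that c_{2t} = 1. Then a_t + 1 ≤ b_t, and consequently k = a_t + b_t + c_t ≤ 2·b_t. -/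
open SimpleGraph

section Aux

variable {V : Type} {G : SimpleGraph V}

lemma exists_adj_dist (hconn : G.Connected) {z y : V} {s : ℕ} (hd : G.dist z y = s + 1) :
    ∃ w, G.Adj z w ∧ G.dist w y = s := by
  obtain ⟨p, hp⟩ := (hconn z y).exists_walk_length_eq_dist
  cases p with
  | nil => rw [hd] at hp; simp at hp
  | cons hadj q =>
    rename_i w
    refine ⟨w, hadj, le_antisymm ?_ ?_⟩
    · have : q.length = s := by
        have := hp; rw [hd] at this; simpa using this
      exact this ▸ SimpleGraph.dist_le q
    · have h1 : G.dist z w = 1 := SimpleGraph.dist_eq_one_iff_adj.2 hadj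
      have h2 := hconn.dist_triangle (u := z) (v := w) (w := y)
      omega

lemma exists_mid (hconn : G.Connected) :
    ∀ (m : ℕ) (x y : V), m ≤ G.dist x y →
      ∃ z, G.dist x z = m ∧ G.dist z y = G.dist x y - m := by
  intro m
  induction m with
  | zero => exact fun x y _ => ⟨x, by simp, by simp⟩
  | succ m ih =>
    intro x y hm
    obtain ⟨z, hz1, hz2⟩ := ih x y (by omega)
    have hd : G.dist z y = (G.dist x y - (m + 1)) + 1 := by omega
    obtain ⟨w, hadj, hw⟩ := exists_adj_dist hconn hd
    have hzw : G.dist z w = 1 := SimpleGraph.dist_eq_one_iff_adj.2 hadj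
    have t1 := hconn.dist_triangle (u := x) (v := z) (w := w)
    have t2 := hconn.dist_triangle (u := x) (v := w) (w := y)
    exact ⟨w, by omega, by omega⟩

end Aux

/-- If `Γ` is distance-regular with diameter `D ≥ 2t` and `c_{2t} = 1` for a positive
integer `t`, then `a_t + 1 ≤ b_t` and consequently `k ≤ 2·b_t`,
where `a_t = k - b_t - c_t`. -/
theorem valency_le_two_bt_of_c2t_eq_one {V : Type} [Fintype V] (G : SimpleGraph V)
    (D : ℕ) (b c : ℕ → ℕ) (h : IsDRG G D b c) (t : ℕ) (ht : 1 ≤ t) (hD : 2 * t ≤ D)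
    (hc : c (2 * t) = 1) :
    (b 0 - b t - c t) + 1 ≤ b t ∧ b 0 ≤ 2 * b t := by
  have hconn := h.connected
  -- monotonicity of c
  have hcmono : ∀ j m, 1 ≤ j → j ≤ m → m ≤ D → c j ≤ c m := by
    intro j m hj hjm hmD
    obtain ⟨x0, y0, hxy0⟩ := h.exists_dist_eq
    obtain ⟨y, hy1, hy2⟩ := exists_mid hconn m x0 y0 (by omega)
    obtain ⟨z, hz1, hz2⟩ := exists_mid hconn (m - j) x0 y (by omega)
    have hzy : G.dist z y = j := by rw [hz2, hy1]; omega
    have hsub : {w : V | G.Adj y w ∧ G.dist z w = j - 1}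
        ⊆ {w : V | G.Adj y w ∧ G.dist x0 w = m - 1} := by
      rintro w ⟨haw, hdw⟩
      have t1 := hconn.dist_triangle (u := x0) (v := z) (w := w)
      have t2 := hconn.dist_triangle (u := x0) (v := w) (w := y)
      have hwy : G.dist w y = 1 := SimpleGraph.dist_eq_one_iff_adj.2 haw.symm
      exact ⟨haw, by omega⟩
    calc c j = _ := (h.count_c j (le_trans hjm hmD) z y hzy).symm
      _ ≤ _ := Set.ncard_le_ncard hsub (Set.toFinite _)
      _ = c m := h.count_c m hmD x0 y hy1
  have hcj : ∀ j, 1 ≤ j → j ≤ 2 * t → c j = 1 := by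
    intro j h1 h2
    have u1 := hcmono j (2 * t) h1 h2 hD
    have u2 := hcmono 1 j le_rfl h1 (by omega)
    rw [hc] at u1; rw [h.c_one] at u2; omega
  -- choose x0, z at distance 2t, midpoint y
  obtain ⟨x0, y0, hxy0⟩ := h.exists_dist_eq
  obtain ⟨z, hz1, -⟩ := exists_mid hconn (2 * t) x0 y0 (by omega)
  obtain ⟨y, hy1, hy2⟩ := exists_mid hconn t x0 z (by omega)
  have hyz : G.dist y z = t := by rw [hy2, hz1]; omega
  -- uniqueness of the vertex at given distances on the geodesic
  have huniq : ∀ j, j ≤ 2 * t → ∀ v1 v2 : V,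
      G.dist x0 v1 = 2 * t - j → G.dist v1 z = j →
      G.dist x0 v2 = 2 * t - j → G.dist v2 z = j → v1 = v2 := by
    intro j
    induction j with
    | zero =>
      intro _ v1 v2 _ h1 _ h2
      have e1 : v1 = z := (hconn.dist_eq_zero_iff).1 h1
      have e2 : v2 = z := (hconn.dist_eq_zero_iff).1 h2
      rw [e1, e2]
    | succ j ih =>
      intro hj v1 v2 hx1 hz1' hx2 hz2'
      have succ_of : ∀ v : V, G.dist x0 v = 2 * t - (j + 1) → G.dist v z = j + 1 →
          ∃ u, G.Adj u v ∧ G.dist x0 u = 2 * t - j ∧ G.dist u z = j := by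
        intro v hxv hvz
        obtain ⟨w, hadj, hwz⟩ := exists_adj_dist hconn hvz
        have hvw : G.dist v w = 1 := SimpleGraph.dist_eq_one_iff_adj.2 hadj
        have t1 := hconn.dist_triangle (u := x0) (v := v) (w := w)
        have t2 := hconn.dist_triangle (u := x0) (v := w) (w := z)
        exact ⟨w, hadj.symm, by omega, hwz⟩
      obtain ⟨u1, ha1, hu1x, hu1z⟩ := succ_of v1 hx1 hz1'
      obtain ⟨u2, ha2, hu2x, hu2z⟩ := succ_of v2 hx2 hz2'
      have hueq : u1 = u2 := ih (by omega) u1 u2 hu1x hu1z hu2x hu2z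
      subst hueq
      have hcard : ({w : V | G.Adj u1 w ∧ G.dist x0 w = (2 * t - j) - 1}).ncard
          = c (2 * t - j) := h.count_c (2 * t - j) (by omega) x0 u1 hu1x
      rw [hcj (2 * t - j) (by omega) (by omega)] at hcard
      obtain ⟨a, ha⟩ := Set.ncard_eq_one.1 hcard
      have m1 : v1 ∈ {w : V | G.Adj u1 w ∧ G.dist x0 w = (2 * t - j) - 1} :=
        ⟨ha1, by omega⟩
      have m2 : v2 ∈ {w : V | G.Adj u1 w ∧ G.dist x0 w = (2 * t - j) - 1} :=
        ⟨ha2, by omega⟩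
      rw [ha] at m1 m2
      rw [Set.mem_singleton_iff.1 m1, Set.mem_singleton_iff.1 m2]
  -- counting neighbours of y
  have hct : c t = 1 := hcj t ht (by omega)
  set A := {w : V | G.Adj y w ∧ G.dist x0 w = t - 1} with hAdef
  set B := {w : V | G.Adj y w ∧ G.dist x0 w = t} with hBdef
  set C := {w : V | G.Adj y w ∧ G.dist x0 w = t + 1} with hCdef
  have hA : A.ncard = 1 := by
    have := h.count_c t (by omega) x0 y hy1; rw [hct] at this; exact this
  have hC : C.ncard = b t := h.count_b t (by omega) x0 y hy1
  have hzy : G.dist z y = t := by rw [SimpleGraph.dist_comm]; exact hyz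
  have hBz : {w : V | G.Adj y w ∧ G.dist z w = t + 1}.ncard = b t :=
    h.count_b t (by omega) z y hzy
  have hN : {w : V | G.Adj y w ∧ G.dist y w = 0 + 1}.ncard = b 0 :=
    h.count_b 0 (by omega) y y (by simp)
  have hNeq : {w : V | G.Adj y w ∧ G.dist y w = 0 + 1} = A ∪ B ∪ C := by
    ext w
    simp only [hAdef, hBdef, hCdef, Set.mem_setOf_eq, Set.mem_union]
    constructor
    · rintro ⟨haw, -⟩
      have hyw : G.dist y w = 1 := SimpleGraph.dist_eq_one_iff_adj.2 haw
      have t1 := hconn.dist_triangle (u := x0) (v := y) (w := w)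
      have t2 := hconn.dist_triangle (u := x0) (v := w) (w := y)
      have hwy : G.dist w y = 1 := by rw [SimpleGraph.dist_comm]; exact hyw
      rw [hy1] at t1 t2
      rcases (by omega : G.dist x0 w = t - 1 ∨ G.dist x0 w = t ∨ G.dist x0 w = t + 1) with
        h1 | h1 | h1
      · exact Or.inl (Or.inl ⟨haw, h1⟩)
      · exact Or.inl (Or.inr ⟨haw, h1⟩)
      · exact Or.inr ⟨haw, h1⟩
    · rintro ((⟨haw, -⟩ | ⟨haw, -⟩) | ⟨haw, -⟩) <;>
        exact ⟨haw, SimpleGraph.dist_eq_one_iff_adj.2 haw⟩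
  have hdisjAB : Disjoint A B := by
    rw [Set.disjoint_left]
    rintro w ⟨-, h1⟩ ⟨-, h2⟩
    omega
  have hdisjABC : Disjoint (A ∪ B) C := by
    rw [Set.disjoint_left]
    rintro w (⟨-, h1⟩ | ⟨-, h1⟩) ⟨-, h2⟩ <;> omega
  have hsum : b 0 = A.ncard + B.ncard + C.ncard := by
    rw [← hN, hNeq, Set.ncard_union_eq hdisjABC (Set.toFinite _) (Set.toFinite _),
      Set.ncard_union_eq hdisjAB (Set.toFinite _) (Set.toFinite _)]
  -- A ∪ B ⊆ Bz
  have hsub : A ∪ B ⊆ {w : V | G.Adj y w ∧ G.dist z w = t + 1} := by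
    rintro w (⟨haw, hdw⟩ | ⟨haw, hdw⟩)
    · have hwy : G.dist w y = 1 := SimpleGraph.dist_eq_one_iff_adj.2 haw.symm
      have t1 := hconn.dist_triangle (u := z) (v := w) (w := x0)
      have t2 := hconn.dist_triangle (u := z) (v := y) (w := w)
      have e1 : G.dist z x0 = 2 * t := by rw [SimpleGraph.dist_comm]; exact hz1
      have e2 : G.dist w x0 = t - 1 := by rw [SimpleGraph.dist_comm]; exact hdw
      have e3 : G.dist y w = 1 := by rw [SimpleGraph.dist_comm]; exact hwy
      exact ⟨haw, by omega⟩
    · have hwy : G.dist w y = 1 := SimpleGraph.dist_eq_one_iff_adj.2 haw.symm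
      have t1 := hconn.dist_triangle (u := z) (v := w) (w := x0)
      have t2 := hconn.dist_triangle (u := z) (v := y) (w := w)
      have e1 : G.dist z x0 = 2 * t := by rw [SimpleGraph.dist_comm]; exact hz1
      have e2 : G.dist w x0 = t := by rw [SimpleGraph.dist_comm]; exact hdw
      have e3 : G.dist y w = 1 := by rw [SimpleGraph.dist_comm]; exact hwy
      rcases (by omega : G.dist z w = t ∨ G.dist z w = t + 1) with h1 | h1
      · exfalso
        have hwz : G.dist w z = t := by rw [SimpleGraph.dist_comm]; exact h1
        have : w = y := huniq t (by omega) w y (by omega) hwz (by omega) hyz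
        exact haw.ne this.symm
      · exact ⟨haw, h1⟩
  have hle : A.ncard + B.ncard ≤ b t := by
    rw [← hBz, ← Set.ncard_union_eq hdisjAB (Set.toFinite _) (Set.toFinite _)]
    exact Set.ncard_le_ncard hsub (Set.toFinite _)
  rw [hct]
  omega
end
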